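/- arXiv:1705.05227 — 9 statements merged into one kernel-verified Lean document; each statement's English description precedes it below -/
import Mathlib

section
/- In End_K(K[x]), define e_{ij} := ∫^i ∂^j − ∫^{i+1} ∂^{j+1} for i,j ∈ ℕ, where ∂ is differentiation and ∫ is integration. Then e_{ij} e_{kl} = δ_{jk} e_{il} (matrix unit relations). -/
open Polynomial

private lemma endExt {K : Type*} [Field K] (f g : Module.End K (Polynomial K))
    (h : ∀ n : ℕ, f (X ^ n) = g (X ^ n)) : f = g := by
  apply LinearMap.ext
  intro p
  induction p using Polynomial.induction_on' with
  | add p q hp hq => simp [map_add, hp, hq]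
  | monomial n a =>
    have hm : (monomial n a : Polynomial K) = a • X ^ n := by
      rw [smul_eq_C_mul, C_mul_X_pow_eq_monomial]
    rw [hm, map_smul, map_smul, h n]

/-- In `End_K(K[x])`, the elements `e i j = ∫^i ∂^j - ∫^(i+1) ∂^(j+1)` satisfy the matrix
unit relations `e i j * e k l = δ_{jk} e i l`. -/
theorem matrix_unit_relations (K : Type*) [Field K] [CharZero K]
    (D J : Module.End K (Polynomial K))
    (hD : ∀ p : Polynomial K, D p = derivative p)
    (hJ : ∀ n : ℕ, J (X ^ n) = ((n : K) + 1)⁻¹ • X ^ (n + 1))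
    (e : ℕ → ℕ → Module.End K (Polynomial K))
    (he : ∀ i j, e i j = J ^ i * D ^ j - J ^ (i + 1) * D ^ (j + 1)) :
    ∀ i j k l, e i j * e k l = if j = k then e i l else 0 := by
  have hDX : ∀ n : ℕ, D (X ^ (n + 1)) = ((n : K) + 1) • X ^ n := by
    intro n
    rw [hD, derivative_X_pow, smul_eq_C_mul]
    push_cast
    simp
  have hD1 : D (X ^ 0 : Polynomial K) = 0 := by
    rw [hD]; simp
  have hDJ : D * J = 1 := by
    apply endExt
    intro n
    rw [Module.End.mul_apply, hJ n, map_smul, hDX, smul_smul,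
      inv_mul_cancel₀ (Nat.cast_add_one_ne_zero n), one_smul,
      Module.End.one_apply]
  have hDJpow : ∀ a : ℕ, D ^ a * J ^ a = 1 := by
    intro a
    induction a with
    | zero => simp
    | succ a ih =>
      rw [pow_succ D, pow_succ' J, mul_assoc, ← mul_assoc D, hDJ, one_mul, ih]
  set P : Module.End K (Polynomial K) := 1 - J * D with hPdef
  have hP0 : P (X ^ 0) = X ^ 0 := by
    rw [hPdef, LinearMap.sub_apply, Module.End.one_apply, Module.End.mul_apply, hD1,
      map_zero, sub_zero]
  have hPs : ∀ n : ℕ, P (X ^ (n + 1)) = 0 := by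
    intro n
    rw [hPdef, LinearMap.sub_apply, Module.End.one_apply, Module.End.mul_apply, hDX,
      map_smul, hJ, smul_smul, mul_inv_cancel₀ (Nat.cast_add_one_ne_zero n),
      one_smul, sub_self]
  have hPP : P * P = P := by
    apply endExt
    intro n
    cases n with
    | zero => rw [Module.End.mul_apply, hP0, hP0]
    | succ n => rw [Module.End.mul_apply, hPs, map_zero]
  have hJ1 : ∀ m : ℕ, (J ^ m) (X ^ 0) = ((m.factorial : K))⁻¹ • X ^ m := by
    intro m
    induction m with
    | zero => simp
    | succ m ih =>
      rw [pow_succ' J, Module.End.mul_apply, ih, map_smul, hJ, smul_smul]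
      congr 1
      rw [Nat.factorial_succ]
      push_cast
      rw [mul_inv]
      ring
  have hPJP : ∀ m : ℕ, P * J ^ (m + 1) * P = 0 := by
    intro m
    apply endExt
    intro n
    cases n with
    | zero =>
      rw [Module.End.mul_apply, Module.End.mul_apply, hP0, hJ1, map_smul, hPs, smul_zero,
        LinearMap.zero_apply]
    | succ n =>
      rw [Module.End.mul_apply, Module.End.mul_apply, hPs, map_zero, map_zero,
        LinearMap.zero_apply]
  have hDpow1 : ∀ m : ℕ, (D ^ (m + 1)) (X ^ 0) = 0 := by
    intro m
    rw [pow_succ D, Module.End.mul_apply, hD1, map_zero]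
  have hPDP : ∀ m : ℕ, P * D ^ (m + 1) * P = 0 := by
    intro m
    apply endExt
    intro n
    cases n with
    | zero =>
      rw [Module.End.mul_apply, Module.End.mul_apply, hP0, hDpow1, map_zero,
        LinearMap.zero_apply]
    | succ n =>
      rw [Module.End.mul_apply, Module.End.mul_apply, hPs, map_zero, map_zero,
        LinearMap.zero_apply]
  have heP : ∀ i j, e i j = J ^ i * P * D ^ j := by
    intro i j
    rw [he, hPdef, mul_sub, mul_one, sub_mul, pow_succ J i, pow_succ' D j]
    simp only [mul_assoc]
  intro i j k l
  rcases Nat.lt_trichotomy j k with h | h | h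
  · obtain ⟨t, rfl⟩ : ∃ t, k = j + (t + 1) := ⟨k - j - 1, by omega⟩
    rw [if_neg (by omega)]
    have hmid : D ^ j * J ^ (j + (t + 1)) = J ^ (t + 1) := by
      rw [pow_add, ← mul_assoc, hDJpow, one_mul]
    calc e i j * e (j + (t + 1)) l
        = J ^ i * ((P * (D ^ j * J ^ (j + (t + 1)))) * P) * D ^ l := by
          rw [heP, heP]; simp only [mul_assoc]
      _ = 0 := by
          rw [hmid, hPJP t]; simp
  · subst h
    rw [if_pos rfl]
    calc e i j * e j l
        = J ^ i * ((P * (D ^ j * J ^ j)) * P) * D ^ l := by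
          rw [heP, heP]; simp only [mul_assoc]
      _ = e i l := by
          rw [hDJpow, mul_one, hPP, heP]
  · obtain ⟨t, rfl⟩ : ∃ t, j = k + (t + 1) := ⟨j - k - 1, by omega⟩
    rw [if_neg (by omega)]
    have hmid : D ^ (k + (t + 1)) * J ^ k = D ^ (t + 1) := by
      rw [add_comm k, pow_add, mul_assoc, hDJpow, mul_one]
    calc e i (k + (t + 1)) * e k l
        = J ^ i * ((P * (D ^ (k + (t + 1)) * J ^ k)) * P) * D ^ l := by
          rw [heP, heP]; simp only [mul_assoc]
      _ = 0 := by
          rw [hmid, hPDP t]; simp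
end

section
/- In End_K(K[x]), e_{ij} = (j!/i!) E_{ij}, where e_{ij} := ∫^i ∂^j − ∫^{i+1} ∂^{j+1} and E_{ij} is the matrix unit with respect to the monomial basis, i.e. E_{ij}(x^s) = δ_{js} x^i. -/
open Polynomial

/-- In `End_K(K[x])`, `e i j = (j!/i!) • E i j` where `E i j` are the matrix units with
respect to the monomial basis, i.e. `E i j (x^s) = δ_{js} x^i`. -/
theorem matrix_unit_comparison (K : Type*) [Field K] [CharZero K]
    (D J : Module.End K (Polynomial K))
    (hD : ∀ p : Polynomial K, D p = derivative p)
    (hJ : ∀ n : ℕ, J (X ^ n) = ((n : K) + 1)⁻¹ • X ^ (n + 1))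
    (e : ℕ → ℕ → Module.End K (Polynomial K))
    (he : ∀ i j, e i j = J ^ i * D ^ j - J ^ (i + 1) * D ^ (j + 1))
    (E : ℕ → ℕ → Module.End K (Polynomial K))
    (hE : ∀ i j s : ℕ, E i j (X ^ s) = if j = s then X ^ i else 0) :
    ∀ i j, e i j = ((j.factorial : K) / (i.factorial : K)) • E i j := by
  -- powers of D on monomials
  have hDpow : ∀ j s : ℕ, (D ^ j) (X ^ s : Polynomial K) =
      if j ≤ s then ((s.descFactorial j : K)) • X ^ (s - j) else 0 := by
    intro j
    induction j with
    | zero => intro s; simp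
    | succ j ih =>
      intro s
      rw [pow_succ', Module.End.mul_apply, ih s]
      by_cases h : j ≤ s
      · rw [if_pos h]
        by_cases h' : j + 1 ≤ s
        · rw [if_pos h']
          rw [map_smul, hD, derivative_X_pow]
          rw [Nat.descFactorial_succ]
          have hs : s - j ≠ 0 := by omega
          have : s - j - 1 = s - (j + 1) := by omega
          rw [this, ← smul_eq_C_mul, smul_smul, Nat.cast_mul, mul_comm]
        · rw [if_neg h']
          have hj : j = s := by omega
          subst hj
          simp [hD]
      · rw [if_neg h, if_neg (by omega), map_zero]
  -- powers of J on monomials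
  have hJpow : ∀ i n : ℕ, (J ^ i) (X ^ n : Polynomial K) =
      (((n + i).descFactorial i : K))⁻¹ • X ^ (n + i) := by
    intro i
    induction i with
    | zero => intro n; simp
    | succ i ih =>
      intro n
      rw [pow_succ, Module.End.mul_apply, hJ n, map_smul, ih (n + 1)]
      have hd : (n + (i + 1)).descFactorial (i + 1) = (n + 1) * (n + 1 + i).descFactorial i := by
        have hni : n + (i + 1) = n + 1 + i := by omega
        rw [hni, Nat.descFactorial_succ]
        congr 1
        omega
      rw [hd, smul_smul]
      have : n + 1 + i = n + (i + 1) := by omega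
      rw [this]
      congr 1
      push_cast
      rw [mul_inv]
  intro i j
  apply Polynomial.lhom_ext'
  intro s
  apply LinearMap.ext_ring
  simp only [LinearMap.coe_comp, Function.comp_apply, ← X_pow_eq_monomial]
  rw [he, LinearMap.sub_apply, Module.End.mul_apply, Module.End.mul_apply,
    LinearMap.smul_apply, hE, hDpow, hDpow]
  by_cases h : j = s
  · subst h
    rw [if_pos rfl, if_pos le_rfl, if_neg (by omega), map_zero, map_smul, sub_zero,
      hJpow, Nat.sub_self, Nat.descFactorial_self, smul_smul]
    have : 0 + i = i := by omega
    rw [this]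
    congr 1
    rw [Nat.descFactorial_self, div_eq_mul_inv, mul_comm]
  · by_cases h' : j ≤ s
    · have h'' : j + 1 ≤ s := by omega
      rw [if_pos h', if_pos h'', if_neg h, smul_zero, map_smul, map_smul, hJpow, hJpow,
        smul_smul, smul_smul]
      have e1 : s - j + i = s - (j + 1) + (i + 1) := by omega
      rw [e1, sub_eq_zero]
      congr 1
      have e2 : s.descFactorial (j + 1) = (s - j) * s.descFactorial j := Nat.descFactorial_succ s j
      have e3 : (s - (j + 1) + (i + 1)).descFactorial (i + 1)
          = (s - j) * (s - (j + 1) + (i + 1)).descFactorial i := by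
        rw [Nat.descFactorial_succ]; congr 1; omega
      have e4 : s - (j+1) + (i+1) = s - j + i := by omega
      rw [e2, e3, e4]
      have hne : ((s - j : ℕ) : K) ≠ 0 := Nat.cast_ne_zero.mpr (by omega)
      rw [Nat.cast_mul, Nat.cast_mul, mul_inv, mul_mul_mul_comm,
        mul_inv_cancel₀ hne, one_mul]
    · rw [if_neg h', if_neg (by omega), if_neg h, map_zero, map_zero, sub_zero, smul_zero]
end

section
/- Let 𝕀₁ ⊆ End_K(K[x]) be the subalgebra generated by x (multiplication), ∂ (differentiation) and ∫ (integration). Then for all n ≥ 1, 𝕀₁ = 𝕀₁∂^n ⊕ 𝕀₁e_{00} ⊕ ⋯ ⊕ 𝕀₁e_{n−1,n−1} as left 𝕀₁-modules, where e_{ii} = ∫^i∂^i − ∫^{i+1}∂^{i+1}. -/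
open Polynomial

set_option synthInstance.maxHeartbeats 1000000
set_option maxHeartbeats 2000000

theorem end_ext' {K : Type*} [CommSemiring K] {f g : Module.End K (Polynomial K)}
    (h : ∀ m : ℕ, f (X ^ m) = g (X ^ m)) : f = g := by
  apply Polynomial.lhom_ext'
  intro m
  apply LinearMap.ext
  intro a
  have : (monomial m) a = a • (X ^ m : Polynomial K) := by
    rw [smul_eq_C_mul, C_mul_X_pow_eq_monomial]
  simp [this, map_smul, h m]

theorem Dpow_eval {K : Type*} [Field K] [CharZero K] (D : Module.End K (Polynomial K))
    (hD : ∀ p : Polynomial K, D p = derivative p) :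
    ∀ j m : ℕ, (D ^ j) (X ^ m : Polynomial K) = (m.descFactorial j : K) • X ^ (m - j) := by
  intro j
  induction j with
  | zero => intro m; simp
  | succ j ih =>
    intro m
    rw [pow_succ, Module.End.mul_apply, hD, derivative_X_pow]
    match m with
    | 0 => simp
    | s + 1 =>
      have h1 : (C ((s+1 : ℕ) : K)) * X ^ (s + 1 - 1) = ((s+1 : ℕ) : K) • X ^ s := by
        rw [smul_eq_C_mul]; norm_num
      rw [h1, map_smul, ih s, Nat.succ_descFactorial_succ, Nat.succ_sub_succ, smul_smul,
        Nat.cast_mul]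

theorem JDpow_eval {K : Type*} [Field K] [CharZero K] (D J : Module.End K (Polynomial K))
    (hD : ∀ p : Polynomial K, D p = derivative p)
    (hJ : ∀ n : ℕ, J (X ^ n) = ((n : K) + 1)⁻¹ • X ^ (n + 1)) :
    ∀ i m : ℕ, (J ^ i * D ^ i) (X ^ m : Polynomial K)
      = if i ≤ m then (X ^ m : Polynomial K) else 0 := by
  intro i
  induction i with
  | zero => intro m; simp
  | succ i ih =>
    intro m
    have hfact : J ^ (i+1) * D ^ (i+1) = J * ((J ^ i * D ^ i) * D) := by
      rw [pow_succ' J, pow_succ D, mul_assoc, ← mul_assoc (J ^ i)]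
    rw [hfact, Module.End.mul_apply, Module.End.mul_apply, Module.End.mul_apply, hD,
      derivative_X_pow]
    match m with
    | 0 => simp
    | s + 1 =>
      have h1 : (C ((s+1 : ℕ) : K)) * X ^ (s + 1 - 1) = ((s+1 : ℕ) : K) • X ^ s := by
        rw [smul_eq_C_mul]; norm_num
      rw [h1, map_smul, map_smul, ← Module.End.mul_apply, ih s]
      simp only [Nat.add_le_add_iff_right]
      by_cases h : i ≤ s
      · rw [if_pos h, if_pos h, map_smul, hJ s, smul_smul]
        have hne : ((s : K) + 1) ≠ 0 := by
          have := Nat.cast_add_one_ne_zero (R := K) s; exact_mod_cast this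
        rw [show ((s+1:ℕ):K) = (s:K)+1 by push_cast; ring, mul_inv_cancel₀ hne, one_smul]
      · rw [if_neg h, if_neg h, smul_zero, map_zero]

/-- For `n ≥ 1`, the algebra `𝕀₁` of polynomial integro-differential operators decomposes as
a left `𝕀₁`-module as `𝕀₁ = 𝕀₁∂^n ⊕ 𝕀₁ e₀₀ ⊕ ⋯ ⊕ 𝕀₁ e_{n-1,n-1}`. -/
theorem I1_decomposition (K : Type*) [Field K] [CharZero K]
    (D J Mx : Module.End K (Polynomial K))
    (hD : ∀ p : Polynomial K, D p = derivative p)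
    (hJ : ∀ n : ℕ, J (X ^ n) = ((n : K) + 1)⁻¹ • X ^ (n + 1))
    (hMx : ∀ p : Polynomial K, Mx p = X * p)
    (e : ℕ → ℕ → Module.End K (Polynomial K))
    (he : ∀ i j, e i j = J ^ i * D ^ j - J ^ (i + 1) * D ^ (j + 1))
    (A : Subalgebra K (Module.End K (Polynomial K)))
    (hA : A = Algebra.adjoin K {Mx, D, J})
    (hDA : D ∈ A) (heA : ∀ i j, e i j ∈ A)
    (n : ℕ) (hn : 1 ≤ n) :
    DirectSum.IsInternal (fun k : Fin (n + 1) =>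
      Fin.cases (motive := fun _ => Submodule A A) (Submodule.span A {(⟨D, hDA⟩ : A) ^ n})
        (fun i : Fin n => Submodule.span A {(⟨e i i, heA i i⟩ : A)}) k) := by
  classical
  have hJA : J ∈ A := by rw [hA]; exact Algebra.subset_adjoin (by simp)
  -- the generator family
  obtain ⟨g, hg0, hgs⟩ : ∃ g : Fin (n+1) → A, g 0 = (⟨D, hDA⟩ : A) ^ n ∧
      ∀ j : Fin n, g j.succ = (⟨e j j, heA j j⟩ : A) :=
    ⟨fun k => Fin.cases ((⟨D, hDA⟩ : A) ^ n) (fun i => ⟨e i i, heA i i⟩) k, by simp, fun j => by simp⟩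
  have hfam : (fun k : Fin (n + 1) =>
      Fin.cases (motive := fun _ => Submodule A A) (Submodule.span A {(⟨D, hDA⟩ : A) ^ n})
        (fun i : Fin n => Submodule.span A {(⟨e i i, heA i i⟩ : A)}) k)
      = fun k => Submodule.span A {g k} := by
    funext k
    refine Fin.cases ?_ ?_ k
    · simp [hg0]
    · intro i; simp [hgs]
  rw [hfam]
  -- evaluation facts
  have hDeval : ∀ m : ℕ, m < n → (D ^ n) (X ^ m : Polynomial K) = 0 := by
    intro m hm
    rw [Dpow_eval D hD, Nat.descFactorial_eq_zero_iff_lt.mpr hm, Nat.cast_zero, zero_smul]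
  have heeval : ∀ i m : ℕ, e i i (X ^ m : Polynomial K)
      = if m = i then (X ^ m : Polynomial K) else 0 := by
    intro i m
    rw [he, LinearMap.sub_apply, JDpow_eval D J hD hJ, JDpow_eval D J hD hJ]
    split_ifs <;> first | omega | simp
  -- coercion facts
  have hg0v : ((g 0 : A) : Module.End K (Polynomial K)) = D ^ n := by rw [hg0]; simp
  have hgsv : ∀ j : Fin n, ((g j.succ : A) : Module.End K (Polynomial K)) = e j j := by
    intro j; rw [hgs]
  -- the key independence computation
  have key : ∀ c d : Fin (n+1) → A, (∑ k, c k • g k) = (∑ k, d k • g k) →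
      ∀ k, c k • g k = d k • g k := by
    intro c d hc
    have hc' : (∑ k, ((c k : Module.End K (Polynomial K)) * ((g k : A) : Module.End K (Polynomial K))))
        = (∑ k, ((d k : Module.End K (Polynomial K)) * ((g k : A) : Module.End K (Polynomial K)))) := by
      have h0 := congrArg Subtype.val hc
      simpa [smul_eq_mul] using h0
    have hterm : ∀ (u : Fin (n+1) → A) (i : Fin n),
        ∑ k, (((u k : A) : Module.End K (Polynomial K)) * ((g k : A) : Module.End K (Polynomial K))) (X ^ (i : ℕ))
          = ((u i.succ : A) : Module.End K (Polynomial K)) (X ^ (i : ℕ)) := by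
      intro u i
      rw [Fin.sum_univ_succ]
      rw [Module.End.mul_apply, hg0v, hDeval i i.isLt, map_zero, zero_add]
      have h3 : ∀ j : Fin n, (((u j.succ : A) : Module.End K (Polynomial K)) * ((g j.succ : A) : Module.End K (Polynomial K))) (X ^ (i : ℕ))
          = if i = j then ((u j.succ : A) : Module.End K (Polynomial K)) (X ^ (i : ℕ)) else 0 := by
        intro j
        rw [Module.End.mul_apply, hgsv, heeval]
        by_cases h : i = j
        · subst h; simp
        · rw [if_neg (fun hv => h (Fin.ext hv)), if_neg h, map_zero]
      rw [Finset.sum_congr rfl fun j _ => h3 j, Finset.sum_ite_eq]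
      simp
    have hzero : ∀ i : Fin n, ((c i.succ : A) : Module.End K (Polynomial K)) (X ^ (i : ℕ))
        = ((d i.succ : A) : Module.End K (Polynomial K)) (X ^ (i : ℕ)) := by
      intro i
      have h2 : ∑ k, (((c k : A) : Module.End K (Polynomial K)) * ((g k : A) : Module.End K (Polynomial K))) (X ^ (i : ℕ))
          = ∑ k, (((d k : A) : Module.End K (Polynomial K)) * ((g k : A) : Module.End K (Polynomial K))) (X ^ (i : ℕ)) := by
        rw [← LinearMap.sum_apply, ← LinearMap.sum_apply, hc']
      rw [hterm c i, hterm d i] at h2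
      exact h2
    have hsucc : ∀ j : Fin n, c j.succ • g j.succ = d j.succ • g j.succ := by
      intro j
      have hcomp : ((c j.succ : A) : Module.End K (Polynomial K)) * e j j
          = ((d j.succ : A) : Module.End K (Polynomial K)) * e j j := by
        apply end_ext'
        intro m
        rw [Module.End.mul_apply, Module.End.mul_apply, heeval]
        split_ifs with h
        · subst h; exact hzero j
        · rw [map_zero, map_zero]
      apply Subtype.ext
      simp only [smul_eq_mul, MulMemClass.coe_mul, hgsv]
      exact hcomp
    have hterm2 : ∀ (u : Fin (n+1) → A) (m : ℕ), n ≤ m →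
        ∑ k, (((u k : A) : Module.End K (Polynomial K)) * ((g k : A) : Module.End K (Polynomial K))) (X ^ m)
          = ((u 0 : A) : Module.End K (Polynomial K)) ((D ^ n) (X ^ m)) := by
      intro u m hm
      rw [Fin.sum_univ_succ, Module.End.mul_apply, hg0v]
      have hz : ∀ j : Fin n, (((u j.succ : A) : Module.End K (Polynomial K)) * ((g j.succ : A) : Module.End K (Polynomial K))) (X ^ m) = 0 := by
        intro j
        rw [Module.End.mul_apply, hgsv, heeval,
          if_neg (by have := j.isLt; omega : ¬ m = (j : ℕ)), map_zero]
      rw [Finset.sum_congr rfl fun j _ => hz j, Finset.sum_const_zero, add_zero]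
    have h0 : c 0 • g 0 = d 0 • g 0 := by
      have hcomp : ((c 0 : A) : Module.End K (Polynomial K)) * (D ^ n)
          = ((d 0 : A) : Module.End K (Polynomial K)) * (D ^ n) := by
        apply end_ext'
        intro m
        rw [Module.End.mul_apply, Module.End.mul_apply]
        by_cases hm : n ≤ m
        · have h2 : ∑ k, (((c k : A) : Module.End K (Polynomial K)) * ((g k : A) : Module.End K (Polynomial K))) (X ^ m)
              = ∑ k, (((d k : A) : Module.End K (Polynomial K)) * ((g k : A) : Module.End K (Polynomial K))) (X ^ m) := by
            rw [← LinearMap.sum_apply, ← LinearMap.sum_apply, hc']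
          rw [hterm2 c m hm, hterm2 d m hm] at h2
          exact h2
        · rw [hDeval m (by omega), map_zero, map_zero]
      apply Subtype.ext
      simp only [smul_eq_mul, MulMemClass.coe_mul, hg0v]
      exact hcomp
    intro k
    exact Fin.cases h0 hsucc k
  refine DirectSum.isInternal_submodule_of_iSupIndep_of_iSup_eq_top (R := ↥A) (M := ↥A)
    (A := fun k => Submodule.span ↥A {g k}) ?_ ?_
  · -- independence
    rw [iSupIndep_def]
    intro k
    rw [Submodule.disjoint_def]
    intro x hx hx2
    obtain ⟨a, ha⟩ := Submodule.mem_span_singleton.mp hx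
    have hbs : (⨆ (j) (_ : j ≠ k), Submodule.span A {g j})
        = ⨆ j ∈ Finset.univ.erase k, Submodule.span A {g j} := by
      apply iSup_congr
      intro j
      simp [Finset.mem_erase]
    rw [hbs, Submodule.mem_iSup_finset_iff_exists_sum] at hx2
    obtain ⟨μ, hμ⟩ := hx2
    choose b hb using fun j => Submodule.mem_span_singleton.mp (μ j).2
    set c : Fin (n+1) → A := fun j => if j = k then a else 0 with hcdef
    set d : Fin (n+1) → A := fun j => if j = k then 0 else b j with hddef
    have e1 : c k • g k = x := by
      rw [show c k = a by simp [hcdef]]; exact ha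
    have e3 : d k • g k = 0 := by
      rw [show d k = 0 by simp [hddef]]; exact zero_smul _ _
    have hs : (∑ j, c j • g j) = ∑ j, d j • g j := by
      rw [← Finset.add_sum_erase _ _ (Finset.mem_univ k),
        ← Finset.add_sum_erase _ (fun j => d j • g j) (Finset.mem_univ k)]
      have e2 : ∑ j ∈ Finset.univ.erase k, c j • g j = 0 :=
        Finset.sum_eq_zero fun j hj => by
          rw [show c j = 0 by simp [hcdef, (Finset.mem_erase.mp hj).1]]
          exact zero_smul _ _
      have e4 : ∑ j ∈ Finset.univ.erase k, d j • g j = x := by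
        rw [← hμ]
        refine Finset.sum_congr rfl fun j hj => ?_
        rw [show d j = b j by simp [hddef, (Finset.mem_erase.mp hj).1]]
        exact hb j
      rw [e1, e2, e3, e4, add_zero, zero_add]
    exact (e1.symm.trans (key c d hs k)).trans e3
  · -- spanning
    have hid : (⟨J, hJA⟩ : A) ^ n * g 0 + ∑ j : Fin n, g j.succ = 1 := by
      apply Subtype.ext
      have hcoe : (((⟨J, hJA⟩ : A) ^ n * g 0 + ∑ j : Fin n, g j.succ : A) : Module.End K (Polynomial K))
          = J ^ n * D ^ n + ∑ j : Fin n, e j j := by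
        push_cast [hg0v]
        exact congrArg _ (Finset.sum_congr rfl fun j _ => hgsv j)
      rw [hcoe]
      have htel := Finset.sum_range_sub' (f := fun i => J ^ i * D ^ i) n
      rw [Fin.sum_univ_eq_sum_range (fun i => e i i) n,
        Finset.sum_congr rfl (fun i _ => he i i), htel]
      simp only [pow_zero, one_mul]
      abel
    rw [eq_top_iff]
    intro a _
    have ha : a = a • (1 : A) := by rw [smul_eq_mul, mul_one]
    rw [ha]
    apply Submodule.smul_mem
    rw [← hid]
    apply Submodule.add_mem
    · exact Submodule.mem_iSup_of_mem 0 (Submodule.smul_mem _ _ (Submodule.mem_span_singleton_self _))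
    · exact Submodule.sum_mem _ fun j _ =>
        Submodule.mem_iSup_of_mem j.succ (Submodule.mem_span_singleton_self _)
end

section
/- In the algebra 𝕀₁ of polynomial integro-differential operators, 𝕀₁ = 𝕀₁∂ ⊕ 𝕀₁e_{00} as left 𝕀₁-modules, where e_{00} = 1 − ∫∂. -/
open Polynomial

set_option synthInstance.maxHeartbeats 1000000
set_option maxHeartbeats 2000000

/-- In the algebra `𝕀₁` of polynomial integro-differential operators,
`𝕀₁ = 𝕀₁∂ ⊕ 𝕀₁ e₀₀` as left `𝕀₁`-modules, where `e₀₀ = 1 - ∫∂`. -/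
theorem I1_eq_Dd_plus_e00 (K : Type*) [Field K] [CharZero K]
    (D J Mx : Module.End K (Polynomial K))
    (hD : ∀ p : Polynomial K, D p = derivative p)
    (hJ : ∀ n : ℕ, J (X ^ n) = ((n : K) + 1)⁻¹ • X ^ (n + 1))
    (hMx : ∀ p : Polynomial K, Mx p = X * p)
    (A : Subalgebra K (Module.End K (Polynomial K)))
    (hA : A = Algebra.adjoin K {Mx, D, J})
    (hDA : D ∈ A) (he00A : 1 - J * D ∈ A) :
    IsCompl (Submodule.span A {(⟨D, hDA⟩ : A)})
      (Submodule.span A {(⟨1 - J * D, he00A⟩ : A)}) := by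
  have hDJ : D * J = 1 := by
    apply LinearMap.ext
    intro p
    simp only [Module.End.mul_apply, Module.End.one_apply]
    induction p using Polynomial.induction_on' with
    | add p q hp hq => simp [map_add, hp, hq]
    | monomial n a =>
      have hne : ((n : K) + 1) ≠ 0 := Nat.cast_add_one_ne_zero n
      rw [← Polynomial.smul_X_eq_monomial, map_smul, map_smul, hJ, map_smul, hD]
      rw [Polynomial.derivative_X_pow]
      push_cast
      rw [Polynomial.smul_eq_C_mul, Polynomial.smul_eq_C_mul, ← mul_assoc, ← C_mul,
        ← mul_assoc, ← C_mul, mul_assoc a, inv_mul_cancel₀ hne, mul_one,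
        ← Polynomial.smul_eq_C_mul]
  have hJA : J ∈ A := by
    rw [hA]; exact Algebra.subset_adjoin (by simp)
  set d : A := ⟨D, hDA⟩ with hd
  set e : A := ⟨1 - J * D, he00A⟩ with he
  set j : A := (⟨J, hJA⟩ : A) with hj
  have hdj : d * j = 1 := Subtype.ext hDJ
  have hEnd : (1 - J * D) * (J * D) = 0 := by
    rw [sub_mul, one_mul, mul_assoc, ← mul_assoc D, hDJ, one_mul, sub_self]
  have hkey : e * (j * d) = 0 := Subtype.ext hEnd
  constructor
  · rw [Submodule.disjoint_def]
    intro x hx hy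
    obtain ⟨b, rfl⟩ := Submodule.mem_span_singleton.mp hx
    obtain ⟨c, hc⟩ := Submodule.mem_span_singleton.mp hy
    have h1 : b • d * (j * d) = b • d := by
      rw [smul_eq_mul, mul_assoc, ← mul_assoc d, hdj, one_mul]
    have h2 : b • d * (j * d) = 0 := by
      rw [← hc, smul_eq_mul, mul_assoc, hkey, mul_zero]
    rw [← h1, h2]
  · rw [codisjoint_iff, eq_top_iff]
    intro x _
    apply Submodule.mem_sup.mpr
    refine ⟨(x * j) • d, Submodule.mem_span_singleton.mpr ⟨x * j, rfl⟩,
      x • e, Submodule.mem_span_singleton.mpr ⟨x, rfl⟩, ?_⟩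
    apply Subtype.ext
    show ((x : Module.End K (Polynomial K)) * J) * D + (x : Module.End K (Polynomial K)) * (1 - J * D) = (x : Module.End K (Polynomial K))
    rw [mul_assoc, mul_sub, mul_one, add_sub_cancel]
end

section
/- The left 𝕀₁-module K[x] (with 𝕀₁ acting by evaluation of operators) is a projective 𝕀₁-module. -/
open Polynomial

set_option synthInstance.maxHeartbeats 1000000
set_option maxHeartbeats 2000000

/-- The tautological module structure of a subalgebra `A ⊆ End_K(K[x])` on `K[x]`:
an operator `a ∈ A` acts on a polynomial by evaluation. -/
noncomputable def tautModule (K : Type*) [Field K]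
    (A : Subalgebra K (Module.End K (Polynomial K))) : Module A (Polynomial K) :=
  Module.compHom (Polynomial K) (A.val.toRingHom)

/-- The left `𝕀₁`-module `K[x]` (with `𝕀₁` acting by evaluation of operators) is projective. -/
theorem polynomial_projective_over_I1 (K : Type*) [Field K] [CharZero K]
    (D J Mx : Module.End K (Polynomial K))
    (hD : ∀ p : Polynomial K, D p = derivative p)
    (hJ : ∀ n : ℕ, J (X ^ n) = ((n : K) + 1)⁻¹ • X ^ (n + 1))
    (hMx : ∀ p : Polynomial K, Mx p = X * p)
    (A : Subalgebra K (Module.End K (Polynomial K)))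
    (hA : A = Algebra.adjoin K {Mx, D, J}) :
    letI := tautModule K A
    Module.Projective A (Polynomial K) := by
  letI := tautModule K A
  have hMxA : Mx ∈ A := by
    rw [hA]; exact Algebra.subset_adjoin (by simp)
  have hDA : D ∈ A := by
    rw [hA]; exact Algebra.subset_adjoin (by simp)
  have hJA : J ∈ A := by
    rw [hA]; exact Algebra.subset_adjoin (by simp)
  -- the projection onto constants
  set E : Module.End K (Polynomial K) := 1 - J * D with hEdef
  have hE : E ∈ A := A.sub_mem A.one_mem (A.mul_mem hJA hDA)
  have he : ∀ q : Polynomial K, E q = C (q.coeff 0) := by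
    intro q
    have key : ∀ q : Polynomial K, q - J (derivative q) = C (q.coeff 0) := by
      intro q
      induction q using Polynomial.induction_on' with
      | add p r hp hr =>
          rw [derivative_add, map_add, coeff_add, C_add, ← hp, ← hr]; ring
      | monomial n a =>
          cases n with
          | zero => simp
          | succ m =>
              have hJm : J ((monomial m) (a * (m + 1 : ℕ))) = (monomial (m + 1)) a := by
                rw [← smul_X_eq_monomial, map_smul, hJ, smul_smul, ← smul_X_eq_monomial]
                congr 1
                have hne : ((m : K) + 1) ≠ 0 := Nat.cast_add_one_ne_zero m
                push_cast
                field_simp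
              rw [derivative_monomial]
              simp only [Nat.add_sub_cancel, hJm]
              simp
    have : E q = q - J (D q) := by
      simp [hEdef, LinearMap.sub_apply, Module.End.mul_apply]
    rw [this, hD, key]
  -- multiplication by X^n
  have hMxpow : ∀ (n : ℕ) (s : Polynomial K), (Mx ^ n) s = X ^ n * s := by
    intro n
    induction n with
    | zero => intro s; simp
    | succ m ih =>
        intro s
        rw [pow_succ, Module.End.mul_apply, hMx, ih, pow_succ]
        ring
  -- aeval Mx r is multiplication by r
  have haeval : ∀ r s : Polynomial K, (Polynomial.aeval Mx r) s = r * s := by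
    intro r s
    induction r using Polynomial.induction_on' with
    | add p q hp hq => rw [map_add, LinearMap.add_apply, hp, hq, add_mul]
    | monomial n a =>
        rw [aeval_monomial, Module.End.mul_apply, hMxpow, ← C_mul_X_pow_eq_monomial]
        rw [Algebra.algebraMap_eq_smul_one]
        simp [smul_eq_C_mul, mul_assoc]
  have hsmul : ∀ (a : A) (p : Polynomial K),
      a • p = (a : Module.End K (Polynomial K)) p := fun _ _ => rfl
  set mx : A := ⟨Mx, hMxA⟩ with hmx
  set e : A := ⟨E, hE⟩ with heA
  have hcoe : ∀ p : Polynomial K,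
      ((Polynomial.aeval mx p : A) : Module.End K (Polynomial K)) = Polynomial.aeval Mx p :=
    fun p => by rw [hmx]; exact Polynomial.coe_aeval_mk_apply (p := p) (x := Mx) hMxA
  -- the splitting map
  let g : Polynomial K →ₗ[A] A :=
    { toFun := fun p => Polynomial.aeval mx p * e
      map_add' := fun p q => by simp only [map_add, add_mul]
      map_smul' := by
        intro a p
        apply Subtype.ext
        apply LinearMap.ext
        intro q
        have c0 : (E q) = C (q.coeff 0) := he q
        show ((Polynomial.aeval mx (a • p) * e : A) : Module.End K (Polynomial K)) q
            = ((a * (Polynomial.aeval mx p * e) : A) : Module.End K (Polynomial K)) q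
        simp only [Subalgebra.coe_mul, Module.End.mul_apply, hcoe]
        show (Polynomial.aeval Mx (a • p)) (E q)
            = (a : Module.End K (Polynomial K)) ((Polynomial.aeval Mx p) (E q))
        rw [c0, haeval, haeval, hsmul]
        have h1 : p * C (q.coeff 0) = q.coeff 0 • p := by
          rw [smul_eq_C_mul, mul_comm]
        have h2 : (a : Module.End K (Polynomial K)) p * C (q.coeff 0)
            = q.coeff 0 • (a : Module.End K (Polynomial K)) p := by
          rw [smul_eq_C_mul, mul_comm]
        rw [h1, h2, map_smul] }
  let π : A →ₗ[A] Polynomial K := LinearMap.toSpanSingleton A (Polynomial K) 1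
  refine Module.Projective.of_split g π ?_
  apply LinearMap.ext
  intro p
  show (Polynomial.aeval mx p * e : A) • (1 : Polynomial K) = p
  rw [hsmul]
  simp only [Subalgebra.coe_mul, Module.End.mul_apply, hcoe]
  show (Polynomial.aeval Mx p) (E 1) = p
  rw [he, haeval]
  simp
end

section
/- Let e_{00} = 1 − ∫∂ in 𝕀₁. Then the left ideal 𝕀₁e_{00} is isomorphic as a left 𝕀₁-module to K[x] (with the tautological action), via the map sending a·e_{00} to a(1) ∈ K[x]. In particular, K[x] ≅ 𝕀₁/𝕀₁∂ as left 𝕀₁-modules. -/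
open Polynomial

set_option synthInstance.maxHeartbeats 4000000
set_option maxHeartbeats 4000000

/-- The left ideal `𝕀₁ e₀₀` (with `e₀₀ = 1 - ∫∂`) is isomorphic as a left `𝕀₁`-module to
`K[x]` via `a e₀₀ ↦ a(1)`; in particular `K[x] ≅ 𝕀₁/𝕀₁∂` as left `𝕀₁`-modules. -/
theorem I1_e00_iso_polynomial (K : Type*) [Field K] [CharZero K]
    (D J Mx : Module.End K (Polynomial K))
    (hD : ∀ p : Polynomial K, D p = derivative p)
    (hJ : ∀ n : ℕ, J (X ^ n) = ((n : K) + 1)⁻¹ • X ^ (n + 1))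
    (hMx : ∀ p : Polynomial K, Mx p = X * p)
    (A : Subalgebra K (Module.End K (Polynomial K)))
    (hA : A = Algebra.adjoin K {Mx, D, J})
    (hDA : D ∈ A) (he00A : 1 - J * D ∈ A) :
    letI := tautModule K A
    (∃ f : (Submodule.span A {(⟨1 - J * D, he00A⟩ : A)}) ≃ₗ[A] Polynomial K,
        ∀ v : Submodule.span A {(⟨1 - J * D, he00A⟩ : A)},
          f v = ((v : A) : Module.End K (Polynomial K)) 1) ∧
    (∃ g : A →ₗ[A] Polynomial K, Function.Surjective g ∧
        LinearMap.ker g = Submodule.span A {(⟨D, hDA⟩ : A)}) := by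
  letI := tautModule K A
  have hMxA : Mx ∈ A := by rw [hA]; exact Algebra.subset_adjoin (by simp)
  have hJA : J ∈ A := by rw [hA]; exact Algebra.subset_adjoin (by simp)
  -- key: J ∘ D = id - (evaluation of constant coefficient)
  have hJD : ∀ p : Polynomial K, (J * D) p = p - C (p.coeff 0) := by
    intro p
    induction p using Polynomial.induction_on' with
    | add p q hp hq =>
      simp only [map_add, coeff_add, C_add] at *
      rw [hp, hq]; ring
    | monomial n a =>
      cases n with
      | zero =>
        simp [Module.End.mul_apply, hD, derivative_monomial, monomial_zero_left]
      | succ m =>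
        have h1 : ((m : K) + 1) ≠ 0 := Nat.cast_add_one_ne_zero m
        rw [Module.End.mul_apply, hD, derivative_monomial]
        have : (monomial (m + 1 - 1)) (a * (↑(m + 1))) = (a * ((m:K)+1)) • X ^ m := by
          push_cast
          rw [smul_eq_C_mul, C_mul_X_pow_eq_monomial]
        rw [this, map_smul, hJ, coeff_monomial]
        simp only [Nat.succ_ne_zero]
        rw [smul_smul, mul_assoc, mul_inv_cancel₀ h1, mul_one, if_neg (by simp),
          map_zero, sub_zero, smul_eq_C_mul, C_mul_X_pow_eq_monomial]
  have he00 : ∀ p : Polynomial K, ((1 : Module.End K (Polynomial K)) - J * D) p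
      = C (p.coeff 0) := by
    intro p
    rw [LinearMap.sub_apply, Module.End.one_apply, hJD]; ring
  have he001 : ((1 : Module.End K (Polynomial K)) - J * D) 1 = 1 := by
    rw [he00]; simp
  -- key algebraic fact
  have hker : ∀ a : A, ((a : Module.End K (Polynomial K)) 1 = 0) →
      a * (⟨1 - J * D, he00A⟩ : A) = 0 := by
    intro a ha
    apply Subtype.ext
    show (a : Module.End K (Polynomial K)) * (1 - J * D) = 0
    apply LinearMap.ext
    intro p
    rw [Module.End.mul_apply, he00]
    have : C (p.coeff 0) = p.coeff 0 • (1 : Polynomial K) := by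
      rw [smul_eq_C_mul, mul_one]
    rw [this, map_smul, ha, smul_zero, LinearMap.zero_apply]
  -- surjectivity of evaluation at 1
  have hpow : ∀ n : ℕ, (Mx ^ n : Module.End K (Polynomial K)) 1 = X ^ n := by
    intro n
    induction n with
    | zero => simp
    | succ m ih => rw [pow_succ', Module.End.mul_apply, ih, hMx, pow_succ']
  have haev : ∀ p : Polynomial K, (Polynomial.aeval Mx p) 1 = p := by
    intro p
    induction p using Polynomial.induction_on' with
    | add p q hp hq => rw [map_add, LinearMap.add_apply, hp, hq]
    | monomial n a =>
      rw [aeval_monomial, Module.End.mul_apply, hpow, Module.algebraMap_end_apply,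
        smul_eq_C_mul, C_mul_X_pow_eq_monomial]
  have hsurj : ∀ p : Polynomial K, ∃ a : A, (a : Module.End K (Polynomial K)) 1 = p := by
    intro p
    refine ⟨Polynomial.aeval (⟨Mx, hMxA⟩ : A) p, ?_⟩
    have hcoe : ((Polynomial.aeval (⟨Mx, hMxA⟩ : A) p : A) : Module.End K (Polynomial K))
        = Polynomial.aeval Mx p := by
      have := Polynomial.aeval_algHom_apply A.val (⟨Mx, hMxA⟩ : A) p
      exact this.symm
    rw [hcoe, haev]
  -- the evaluation map as an A-linear map
  let ev : A →ₗ[A] Polynomial K :=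
    { toFun := fun a => (a : Module.End K (Polynomial K)) 1
      map_add' := fun a b => rfl
      map_smul' := fun b a => rfl }
  have hev : ∀ a : A, ev a = (a : Module.End K (Polynomial K)) 1 := fun _ => rfl
  constructor
  · -- the isomorphism with the left ideal
    set e₀ : A := (⟨1 - J * D, he00A⟩ : A) with he₀
    let ev' : (Submodule.span A {e₀}) →ₗ[A] Polynomial K :=
      ev.comp (Submodule.span A {e₀}).subtype
    have hinj : ∀ v : Submodule.span A {e₀}, ev' v = 0 → v = 0 := by
      rintro ⟨v, hv⟩ h0
      rw [Submodule.mem_span_singleton] at hv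
      obtain ⟨c, rfl⟩ := hv
      have h1 : ((c • e₀ : A) : Module.End K (Polynomial K)) 1 = 0 := h0
      rw [smul_eq_mul] at h1
      have h2 : ((c * e₀ : A) : Module.End K (Polynomial K))
          = (c : Module.End K (Polynomial K)) * (1 - J * D) := rfl
      rw [h2, Module.End.mul_apply, he001] at h1
      have h3 := hker c h1
      apply Subtype.ext
      show c • e₀ = 0
      rw [smul_eq_mul, h3]
    have hsurj' : Function.Surjective ev' := by
      intro p
      obtain ⟨a, ha⟩ := hsurj p
      refine ⟨⟨a • e₀, Submodule.smul_mem _ a (Submodule.mem_span_singleton_self e₀)⟩, ?_⟩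
      show ((a • e₀ : A) : Module.End K (Polynomial K)) 1 = p
      rw [smul_eq_mul]
      have h2 : ((a * e₀ : A) : Module.End K (Polynomial K))
          = (a : Module.End K (Polynomial K)) * (1 - J * D) := rfl
      rw [h2, Module.End.mul_apply, he001, ha]
    have hval : ∀ u : Submodule.span A {e₀}, ∀ c : A, c • e₀ = (u : A) →
        ev' u = (c : Module.End K (Polynomial K)) 1 := by
      intro u c hc
      show ((u : A) : Module.End K (Polynomial K)) 1 = _
      rw [← hc, smul_eq_mul]
      have h2 : ((c * e₀ : A) : Module.End K (Polynomial K))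
          = (c : Module.End K (Polynomial K)) * (1 - J * D) := rfl
      rw [h2, Module.End.mul_apply, he001]
    have hinj' : Function.Injective ev' := by
      intro u v huv
      obtain ⟨c, hc⟩ := Submodule.mem_span_singleton.mp u.2
      obtain ⟨d, hd⟩ := Submodule.mem_span_singleton.mp v.2
      have hcd : ((c - d : A) : Module.End K (Polynomial K)) 1 = 0 := by
        have h1 : (c : Module.End K (Polynomial K)) 1 = (d : Module.End K (Polynomial K)) 1 := by
          rw [← hval u c hc, ← hval v d hd, huv]
        have h2 : ((c - d : A) : Module.End K (Polynomial K))
            = (c : Module.End K (Polynomial K)) - (d : Module.End K (Polynomial K)) := rfl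
        rw [h2, LinearMap.sub_apply, h1, sub_self]
      have h3 : (c - d) * e₀ = 0 := hker (c - d) hcd
      have h4 : c * e₀ = d * e₀ := by
        have h3' : ((c : Module.End K (Polynomial K)) - d) * (1 - J * D) = 0 :=
          congrArg Subtype.val h3
        rw [sub_mul, sub_eq_zero] at h3'
        exact Subtype.ext h3'
      apply Subtype.ext
      rw [← hc, ← hd, smul_eq_mul, smul_eq_mul, h4]
    exact ⟨LinearEquiv.ofBijective ev' ⟨hinj', hsurj'⟩, fun v => rfl⟩
  · -- the quotient description
    refine ⟨ev, fun p => hsurj p, ?_⟩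
    ext a
    rw [LinearMap.mem_ker, Submodule.mem_span_singleton]
    constructor
    · intro h0
      refine ⟨a * ⟨J, hJA⟩, ?_⟩
      have hz : (a : Module.End K (Polynomial K)) * (1 - J * D) = 0 :=
        congrArg Subtype.val (hker a h0)
      rw [mul_sub, mul_one, sub_eq_zero] at hz
      rw [smul_eq_mul]
      apply Subtype.ext
      show (a : Module.End K (Polynomial K)) * J * D = (a : Module.End K (Polynomial K))
      rw [mul_assoc]
      exact hz.symm
    · rintro ⟨c, rfl⟩
      show ((c • (⟨D, hDA⟩ : A) : A) : Module.End K (Polynomial K)) 1 = 0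
      rw [smul_eq_mul]
      have h2 : ((c * (⟨D, hDA⟩ : A) : A) : Module.End K (Polynomial K))
          = (c : Module.End K (Polynomial K)) * D := rfl
      rw [h2, Module.End.mul_apply, hD, derivative_one, map_zero]
end

section
/- In End_K(K[x]), with F := span_K{e_{ij} : i,j ∈ ℕ}, F is a two-sided ideal of the algebra 𝕀₁ and F² = F. -/
open Polynomial

set_option synthInstance.maxHeartbeats 1000000
set_option maxHeartbeats 2000000

/-- `F = span_K {e i j}` is a two-sided ideal of `𝕀₁` and `F² = F`. -/
theorem F_ideal_idempotent (K : Type*) [Field K] [CharZero K]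
    (D J Mx : Module.End K (Polynomial K))
    (hD : ∀ p : Polynomial K, D p = derivative p)
    (hJ : ∀ n : ℕ, J (X ^ n) = ((n : K) + 1)⁻¹ • X ^ (n + 1))
    (hMx : ∀ p : Polynomial K, Mx p = X * p)
    (e : ℕ → ℕ → Module.End K (Polynomial K))
    (he : ∀ i j, e i j = J ^ i * D ^ j - J ^ (i + 1) * D ^ (j + 1))
    (A : Subalgebra K (Module.End K (Polynomial K)))
    (hA : A = Algebra.adjoin K {Mx, D, J})
    (F : Submodule K (Module.End K (Polynomial K)))
    (hF : F = Submodule.span K {f | ∃ i j, f = e i j}) :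
    (∀ f ∈ F, f ∈ A) ∧
    (∀ a ∈ A, ∀ f ∈ F, a * f ∈ F ∧ f * a ∈ F) ∧
    F * F = F := by
  subst hA hF
  -- extensionality on monomials
  have hext : ∀ f g : Module.End K (Polynomial K),
      (∀ n : ℕ, f (X ^ n) = g (X ^ n)) → f = g := by
    intro f g h
    refine LinearMap.ext fun p => ?_
    induction p using Polynomial.induction_on' with
    | add p q hp hq => simp [map_add, hp, hq]
    | monomial n a =>
        rw [← smul_X_eq_monomial, map_smul, map_smul, h n]
  -- D ∘ J = 1
  have hDJ : D * J = 1 := by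
    apply hext
    intro n
    have hne : ((n : K) + 1) ≠ 0 := Nat.cast_add_one_ne_zero n
    rw [Module.End.mul_apply, hJ, map_smul, hD, derivative_X_pow, Module.End.one_apply]
    simp only [Nat.cast_add, Nat.cast_one, Nat.add_sub_cancel]
    rw [← smul_eq_C_mul, smul_smul, inv_mul_cancel₀ hne, one_smul]
  -- integration by parts : Mx = J ∘ Mx ∘ D + J
  have hIBP : Mx = J * Mx * D + J := by
    apply hext
    intro n
    rw [LinearMap.add_apply, Module.End.mul_apply, Module.End.mul_apply, hD,
      derivative_X_pow]
    cases n with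
    | zero =>
        have h0 := hJ 0
        simp only [pow_zero, pow_one] at h0
        simp [hMx, h0]
    | succ m =>
        rw [hMx, hMx]
        have hXp : X * (C ((m + 1 : ℕ) : K) * X ^ (m + 1 - 1)) = ((m:K)+1) • X ^ (m+1) := by
          rw [smul_eq_C_mul]; push_cast; ring
        rw [hXp, map_smul, hJ, smul_smul, ← add_smul]
        have hne2 : ((m + 1 : ℕ) : K) + 1 ≠ 0 := Nat.cast_add_one_ne_zero (m + 1)
        have hsc : ((m:K) + 1) * (((m + 1 : ℕ) : K) + 1)⁻¹ + (((m + 1 : ℕ) : K) + 1)⁻¹ = 1 := by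
          push_cast at hne2 ⊢
          field_simp
        rw [hsc, one_smul, ← pow_succ']
  have hDJpow : ∀ k, D * J ^ (k + 1) = J ^ k := by
    intro k; rw [pow_succ', ← mul_assoc, hDJ, one_mul]
  have hDpowJ : ∀ k, D ^ (k + 1) * J = D ^ k := by
    intro k; rw [pow_succ, mul_assoc, hDJ, mul_one]
  -- relations for left multiplication
  have rJ : ∀ i j, J * e i j = e (i + 1) j := by
    intro i j
    rw [he, he, mul_sub, ← mul_assoc, ← pow_succ', ← mul_assoc, ← pow_succ']
  have rD0 : ∀ j, D * e 0 j = 0 := by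
    intro j
    rw [he, pow_zero, one_mul, pow_one, mul_sub, ← pow_succ', ← mul_assoc, hDJ,
      one_mul, sub_self]
  have rDS : ∀ i j, D * e (i + 1) j = e i j := by
    intro i j
    rw [he (i+1) j, he i j, mul_sub, ← mul_assoc, ← mul_assoc, hDJpow, hDJpow]
  have rMxL : ∀ i j, Mx * e i j = ((i : K) + 1) • e (i + 1) j := by
    intro i
    induction i with
    | zero =>
        intro j
        rw [hIBP, add_mul, mul_assoc, mul_assoc, rD0, mul_zero, mul_zero, zero_add,
          rJ]
        simp
    | succ i ih =>
        intro j
        rw [hIBP, add_mul, mul_assoc, mul_assoc, rDS, ih, mul_smul_comm, rJ]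
        push_cast
        module
  -- relations for right multiplication
  have rDr : ∀ i j, e i j * D = e i (j + 1) := by
    intro i j
    rw [he, he, sub_mul, mul_assoc, mul_assoc, ← pow_succ, ← pow_succ]
  have rJr0 : ∀ i, e i 0 * J = 0 := by
    intro i
    rw [he, pow_zero, mul_one, pow_one, sub_mul, mul_assoc, hDJ, mul_one,
      ← pow_succ, sub_self]
  have rJrS : ∀ i j, e i (j + 1) * J = e i j := by
    intro i j
    rw [he i (j+1), he i j, sub_mul, mul_assoc, mul_assoc, hDpowJ, hDpowJ]
  have rMxr0 : ∀ i, e i 0 * Mx = 0 := by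
    intro i
    conv_lhs => rw [hIBP]
    rw [mul_add, ← mul_assoc, ← mul_assoc, rJr0, zero_mul, zero_mul, add_zero]
  have rMxrS : ∀ j i, e i (j + 1) * Mx = ((j : K) + 1) • e i j := by
    intro j
    induction j with
    | zero =>
        intro i
        conv_lhs => rw [hIBP]
        rw [mul_add, ← mul_assoc, ← mul_assoc, rJrS, rMxr0, zero_mul, zero_add]
        simp
    | succ j ih =>
        intro i
        conv_lhs => rw [hIBP]
        rw [mul_add, ← mul_assoc, ← mul_assoc, rJrS, ih, smul_mul_assoc, rDr]
        push_cast
        module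
  -- e i 0 * e 0 j = e i j
  have reD : ∀ j i, e i 0 * D ^ j = e i j := by
    intro j
    induction j with
    | zero => intro i; rw [pow_zero, mul_one]
    | succ j ih => intro i; rw [pow_succ, ← mul_assoc, ih, rDr]
  have re0 : ∀ i j, e i 0 * e 0 j = e i j := by
    intro i j
    rw [he 0 j, pow_zero, one_mul, pow_one, mul_sub, reD, ← mul_assoc, rJr0,
      zero_mul, sub_zero]
  -- notations
  set S : Set (Module.End K (Polynomial K)) := {f | ∃ i j, f = e i j} with hS
  set Fs := Submodule.span K S with hFs
  have hmem : ∀ i j, e i j ∈ Fs := fun i j => Submodule.subset_span ⟨i, j, rfl⟩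
  -- Part 1 : F ⊆ A
  have hJA : J ∈ Algebra.adjoin K {Mx, D, J} := Algebra.subset_adjoin (by simp)
  have hDA : D ∈ Algebra.adjoin K {Mx, D, J} := Algebra.subset_adjoin (by simp)
  have hFA : ∀ f ∈ Fs, f ∈ Algebra.adjoin K {Mx, D, J} := by
    intro f hf
    have : Fs ≤ Subalgebra.toSubmodule (Algebra.adjoin K {Mx, D, J}) := by
      rw [hFs]
      apply Submodule.span_le.mpr
      rintro f ⟨i, j, rfl⟩
      simp only [Subalgebra.coe_toSubmodule, SetLike.mem_coe]
      rw [he]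
      exact sub_mem (mul_mem (pow_mem hJA i) (pow_mem hDA j))
        (mul_mem (pow_mem hJA (i+1)) (pow_mem hDA (j+1)))
    exact this hf
  -- closure under multiplication by a fixed element
  have hL : ∀ g : Module.End K (Polynomial K), (∀ i j, g * e i j ∈ Fs) →
      ∀ f ∈ Fs, g * f ∈ Fs := by
    intro g hg f hf
    induction hf using Submodule.span_induction with
    | mem x hx => obtain ⟨i, j, rfl⟩ := hx; exact hg i j
    | zero => rw [mul_zero]; exact Fs.zero_mem
    | add x y hx hy hx' hy' => rw [mul_add]; exact Fs.add_mem hx' hy'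
    | smul a x hx hx' => rw [mul_smul_comm]; exact Fs.smul_mem a hx'
  have hR : ∀ g : Module.End K (Polynomial K), (∀ i j, e i j * g ∈ Fs) →
      ∀ f ∈ Fs, f * g ∈ Fs := by
    intro g hg f hf
    induction hf using Submodule.span_induction with
    | mem x hx => obtain ⟨i, j, rfl⟩ := hx; exact hg i j
    | zero => rw [zero_mul]; exact Fs.zero_mem
    | add x y hx hy hx' hy' => rw [add_mul]; exact Fs.add_mem hx' hy'
    | smul a x hx hx' => rw [smul_mul_assoc]; exact Fs.smul_mem a hx'
  -- generator closures
  have genL : ∀ g ∈ ({Mx, D, J} : Set (Module.End K (Polynomial K))),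
      ∀ f ∈ Fs, g * f ∈ Fs := by
    rintro g (rfl | rfl | rfl)
    · exact hL _ fun i j => by rw [rMxL]; exact Fs.smul_mem _ (hmem _ _)
    · refine hL _ fun i j => ?_
      cases i with
      | zero => rw [rD0]; exact Fs.zero_mem
      | succ i => rw [rDS]; exact hmem _ _
    · exact hL _ fun i j => by rw [rJ]; exact hmem _ _
  have genR : ∀ g ∈ ({Mx, D, J} : Set (Module.End K (Polynomial K))),
      ∀ f ∈ Fs, f * g ∈ Fs := by
    rintro g (rfl | rfl | rfl)
    · refine hR _ fun i j => ?_
      cases j with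
      | zero => rw [rMxr0]; exact Fs.zero_mem
      | succ j => rw [rMxrS]; exact Fs.smul_mem _ (hmem _ _)
    · exact hR _ fun i j => by rw [rDr]; exact hmem _ _
    · refine hR _ fun i j => ?_
      cases j with
      | zero => rw [rJr0]; exact Fs.zero_mem
      | succ j => rw [rJrS]; exact hmem _ _
  -- Part 2 : two-sided ideal
  have hIdeal : ∀ a ∈ Algebra.adjoin K {Mx, D, J}, ∀ f ∈ Fs,
      a * f ∈ Fs ∧ f * a ∈ Fs := by
    intro a ha
    induction ha using Algebra.adjoin_induction with
    | mem x hx => exact fun f hf => ⟨genL x hx f hf, genR x hx f hf⟩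
    | algebraMap r =>
        intro f hf
        rw [Algebra.algebraMap_eq_smul_one, smul_mul_assoc, one_mul,
          mul_smul_comm, mul_one]
        exact ⟨Fs.smul_mem r hf, Fs.smul_mem r hf⟩
    | add x y hx hy hx' hy' =>
        intro f hf
        rw [add_mul, mul_add]
        exact ⟨Fs.add_mem (hx' f hf).1 (hy' f hf).1,
          Fs.add_mem (hx' f hf).2 (hy' f hf).2⟩
    | mul x y hx hy hx' hy' =>
        intro f hf
        constructor
        · rw [mul_assoc]; exact (hx' _ (hy' f hf).1).1
        · rw [← mul_assoc]; exact (hy' _ (hx' f hf).2).2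
  refine ⟨hFA, hIdeal, ?_⟩
  -- Part 3 : F * F = F
  apply le_antisymm
  · apply Submodule.mul_le.mpr
    intro f hf g hg
    exact (hIdeal f (hFA f hf) g hg).1
  · rw [hFs]
    apply Submodule.span_le.mpr
    rintro f ⟨i, j, rfl⟩
    rw [← re0]
    exact Submodule.mul_mem_mul (hmem i 0) (hmem 0 j)
end

section
/- Let α(H) ∈ K[H] be a nonzero polynomial evaluated at H = ∂x in 𝕀₁. Then the set {a ∈ 𝕀₁ : a·α(H) = 0} (the left annihilator of α(H) in 𝕀₁) is contained in F = span_K{e_{ij}}; more precisely, it equals ⊕_{i: α(i+1)=0} ⊕_{j∈ℕ} K e_{ji}. -/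
open Polynomial

set_option synthInstance.maxHeartbeats 1000000
set_option maxHeartbeats 2000000

section Helpers
open Finset

private lemma endExt0' {K : Type*} [Field K] (f : Module.End K (Polynomial K))
    (h : ∀ n : ℕ, f (X ^ n) = 0) : f = 0 := by
  apply LinearMap.ext
  intro p
  induction p using Polynomial.induction_on' with
  | add p q hp hq => simp [map_add, hp, hq]
  | monomial n c =>
      rw [← C_mul_X_pow_eq_monomial, ← smul_eq_C_mul, map_smul, h, smul_zero,
        LinearMap.zero_apply]

private lemma pow_eig' {K : Type*} [Field K] (f : Module.End K (Polynomial K)) (v : Polynomial K)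
    (μ : K) (h : f v = μ • v) (n : ℕ) : (f ^ n) v = μ ^ n • v := by
  induction n with
  | zero => simp
  | succ n ih => rw [pow_succ', Module.End.mul_apply, ih, map_smul, h, smul_smul, ← pow_succ]

private lemma aeval_eig' {K : Type*} [Field K] (f : Module.End K (Polynomial K)) (v : Polynomial K)
    (μ : K) (h : f v = μ • v) (p : Polynomial K) : (aeval f p) v = (p.eval μ) • v := by
  induction p using Polynomial.induction_on' with
  | add p q hp hq => simp [map_add, LinearMap.add_apply, hp, hq, add_smul]
  | monomial n c =>
      rw [aeval_monomial, eval_monomial, Module.End.mul_apply, pow_eig' f v μ h,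
        map_smul, Module.algebraMap_end_apply, smul_smul, mul_comm]

private lemma Dpow' {K : Type*} [Field K] (D : Module.End K (Polynomial K))
    (hD : ∀ p : Polynomial K, D p = derivative p) (j n : ℕ) :
    (D ^ j) (X ^ n : Polynomial K) = ((n.descFactorial j : ℕ) : K) • X ^ (n - j) := by
  induction j with
  | zero => simp
  | succ j ih =>
      rw [pow_succ', Module.End.mul_apply, ih, map_smul, hD, derivative_X_pow,
        ← smul_eq_C_mul, smul_smul, Nat.descFactorial_succ]
      have hexp : n - j - 1 = n - (j + 1) := by omega
      rw [hexp, Nat.cast_mul, mul_comm]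

private lemma Jpow' {K : Type*} [Field K] (J : Module.End K (Polynomial K))
    (hJ : ∀ n : ℕ, J (X ^ n : Polynomial K) = ((n : K) + 1)⁻¹ • X ^ (n + 1)) (i n : ℕ) :
    (J ^ i) (X ^ n : Polynomial K)
      = (∏ t ∈ Finset.range i, (((n : K) + t) + 1)⁻¹) • X ^ (n + i) := by
  induction i with
  | zero => simp
  | succ i ih =>
      rw [pow_succ', Module.End.mul_apply, ih, map_smul, hJ, smul_smul, prod_range_succ]
      push_cast
      ring_nf

variable {K : Type*} [Field K] [CharZero K] (D J : Module.End K (Polynomial K))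
  (hD : ∀ p : Polynomial K, D p = derivative p)
  (hJ : ∀ n : ℕ, J (X ^ n : Polynomial K) = ((n : K) + 1)⁻¹ • X ^ (n + 1))

include hD hJ

private lemma eij_ne' (i j n : ℕ) (hn : n ≠ j) :
    (J ^ i * D ^ j - J ^ (i + 1) * D ^ (j + 1)) (X ^ n : Polynomial K) = 0 := by
  rw [LinearMap.sub_apply, Module.End.mul_apply, Module.End.mul_apply,
    Dpow' D hD, Dpow' D hD, map_smul, map_smul, Jpow' J hJ, Jpow' J hJ]
  rcases lt_or_gt_of_ne hn with h | h
  · have h1 : n.descFactorial j = 0 := Nat.descFactorial_eq_zero_iff_lt.2 h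
    have h2 : n.descFactorial (j + 1) = 0 := Nat.descFactorial_eq_zero_iff_lt.2 (by omega)
    simp [h1, h2]
  · obtain ⟨k, rfl⟩ : ∃ k, n = j + k + 1 := ⟨n - j - 1, by omega⟩
    have h1 : j + k + 1 - j = k + 1 := by omega
    have h2 : j + k + 1 - (j + 1) = k := by omega
    rw [h1, h2, smul_smul, smul_smul]
    have h3 : k + 1 + i = k + (i + 1) := by omega
    rw [h3, sub_eq_zero]
    congr 1
    have hP : (∏ t ∈ Finset.range i, ((((k+1 : ℕ) : K) + t) + 1)⁻¹)
        = ∏ t ∈ Finset.range i, (((k : K) + (t+1)) + 1)⁻¹ :=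
      Finset.prod_congr rfl (fun t _ => by push_cast; ring_nf)
    rw [hP, Nat.descFactorial_succ, h1, prod_range_succ']
    have hk : ((k : K) + 1) ≠ 0 := Nat.cast_add_one_ne_zero k
    have h0 : ((k : K) + (0:ℕ)) + 1 = (k : K) + 1 := by push_cast; ring
    rw [h0, Nat.cast_mul, Nat.cast_add, Nat.cast_one]
    rw [mul_assoc, mul_comm ((k:K)+1), mul_assoc, mul_assoc,
      inv_mul_cancel₀ hk, mul_one]
    congr 1
    exact Finset.prod_congr rfl (fun t _ => by push_cast; ring_nf)

private lemma eij_eq' (i j : ℕ) :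
    (J ^ i * D ^ j - J ^ (i + 1) * D ^ (j + 1)) (X ^ j : Polynomial K)
      = ((j.factorial : K) * ∏ t ∈ Finset.range i, ((t : K) + 1)⁻¹) • X ^ i := by
  rw [LinearMap.sub_apply, Module.End.mul_apply, Module.End.mul_apply,
    Dpow' D hD, Dpow' D hD, map_smul, map_smul, Jpow' J hJ, Jpow' J hJ]
  have h2 : j.descFactorial (j + 1) = 0 := Nat.descFactorial_eq_zero_iff_lt.2 (by omega)
  rw [h2, Nat.descFactorial_self, Nat.sub_self]
  simp [smul_smul]

omit hD hJ in
private lemma eij_coef_ne_zero' (i j : ℕ) :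
    ((j.factorial : K) * ∏ t ∈ Finset.range i, ((t : K) + 1)⁻¹) ≠ 0 := by
  apply mul_ne_zero
  · exact_mod_cast Nat.cast_ne_zero.2 j.factorial_ne_zero
  · apply prod_ne_zero_iff.2
    intro t _
    exact inv_ne_zero (Nat.cast_add_one_ne_zero t)

end Helpers

/-- For a nonzero polynomial `α`, the left annihilator of `α(H)` in `𝕀₁` is contained in
`F = span_K {e i j}`; more precisely, it equals `⊕_{i : α(i+1)=0} ⊕_{j} K e_{j i}`. -/
theorem left_annihilator_of_alpha_H (K : Type*) [Field K] [CharZero K]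
    (D J Mx H : Module.End K (Polynomial K))
    (hD : ∀ p : Polynomial K, D p = derivative p)
    (hJ : ∀ n : ℕ, J (X ^ n) = ((n : K) + 1)⁻¹ • X ^ (n + 1))
    (hMx : ∀ p : Polynomial K, Mx p = X * p)
    (hH : H = D * Mx)
    (e : ℕ → ℕ → Module.End K (Polynomial K))
    (he : ∀ i j, e i j = J ^ i * D ^ j - J ^ (i + 1) * D ^ (j + 1))
    (A : Subalgebra K (Module.End K (Polynomial K)))
    (hA : A = Algebra.adjoin K {Mx, D, J})
    (F : Submodule K (Module.End K (Polynomial K)))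
    (hF : F = Submodule.span K {f | ∃ i j, f = e i j})
    (α : Polynomial K) (hα : α ≠ 0) :
    {a : Module.End K (Polynomial K) | a ∈ A ∧ a * Polynomial.aeval H α = 0} ⊆ ↑F ∧
    {a : Module.End K (Polynomial K) | a ∈ A ∧ a * Polynomial.aeval H α = 0} =
      ↑(Submodule.span K
        {f | ∃ i j : ℕ, Polynomial.eval ((i : K) + 1) α = 0 ∧ f = e j i}) := by
  classical
  set q : Module.End K (Polynomial K) := Polynomial.aeval H α with hq
  set c : ℕ → ℕ → K := fun i j => (j.factorial : K) * ∏ t ∈ Finset.range i, ((t : K) + 1)⁻¹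
    with hc
  have heX : ∀ i j n : ℕ, n ≠ j → (e i j) (X ^ n) = 0 := fun i j n hn => by
    rw [he]; exact eij_ne' D J hD hJ i j n hn
  have heXj : ∀ i j : ℕ, (e i j) (X ^ j) = c i j • X ^ i := fun i j => by
    rw [he]; exact eij_eq' D J hD hJ i j
  have hc0 : ∀ i j : ℕ, c i j ≠ 0 := fun i j => eij_coef_ne_zero' i j
  have hHX : ∀ n : ℕ, H ((X : Polynomial K) ^ n) = ((n : K) + 1) • X ^ n := by
    intro n
    rw [hH, Module.End.mul_apply, hMx, ← pow_succ', hD, derivative_X_pow, ← smul_eq_C_mul]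
    push_cast
    simp
  have haev : ∀ n : ℕ, q ((X : Polynomial K) ^ n) = (α.eval ((n : K) + 1)) • X ^ n :=
    fun n => aeval_eig' H _ _ (hHX n) α
  -- characterization of the annihilator condition
  have hann : ∀ a : Module.End K (Polynomial K),
      a * q = 0 ↔ ∀ n : ℕ, α.eval ((n : K) + 1) ≠ 0 → a (X ^ n) = 0 := by
    intro a
    constructor
    · intro h0 n hne
      have h1 : (a * q) (X ^ n) = 0 := by rw [h0]; rfl
      rw [Module.End.mul_apply, haev n, map_smul] at h1
      exact (smul_eq_zero.1 h1).resolve_left hne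
    · intro h0
      apply endExt0'
      intro n
      rw [Module.End.mul_apply, haev n, map_smul]
      by_cases hne : α.eval ((n : K) + 1) = 0
      · rw [hne, zero_smul]
      · rw [h0 n hne, smul_zero]
  have hmemA : ∀ i j : ℕ, e i j ∈ A := by
    intro i j
    rw [he, hA]
    have hJm : J ∈ Algebra.adjoin K {Mx, D, J} := Algebra.subset_adjoin (by simp)
    have hDm : D ∈ Algebra.adjoin K {Mx, D, J} := Algebra.subset_adjoin (by simp)
    exact sub_mem (mul_mem (pow_mem hJm i) (pow_mem hDm j))
      (mul_mem (pow_mem hJm (i + 1)) (pow_mem hDm (j + 1)))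
  set G : Set (Module.End K (Polynomial K)) :=
    {f | ∃ i j : ℕ, Polynomial.eval ((i : K) + 1) α = 0 ∧ f = e j i} with hG
  -- reverse inclusion : span G ⊆ annihilator set
  have hrev : (Submodule.span K G : Set (Module.End K (Polynomial K)))
      ⊆ {a : Module.End K (Polynomial K) | a ∈ A ∧ a * q = 0} := by
    have hle : Submodule.span K G ≤
        Subalgebra.toSubmodule A ⊓ LinearMap.ker (LinearMap.mulRight K q) := by
      rw [Submodule.span_le]
      rintro f ⟨i, j, hroot, rfl⟩
      refine ⟨hmemA j i, ?_⟩
      simp only [SetLike.mem_coe, LinearMap.mem_ker, LinearMap.mulRight_apply]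
      apply (hann _).2
      intro n hne
      rcases eq_or_ne n i with rfl | hni
      · exact absurd hroot hne
      · exact heX j i n hni
    intro x hx
    obtain ⟨h1, h2⟩ := hle hx
    exact ⟨h1, LinearMap.mem_ker.1 h2⟩
  -- forward inclusion : annihilator set ⊆ span G
  have hfin : {n : ℕ | α.eval ((n : K) + 1) = 0}.Finite := by
    have hsub : {n : ℕ | α.eval ((n : K) + 1) = 0}
        ⊆ (fun n : ℕ => ((n : K) + 1)) ⁻¹' {x | α.IsRoot x} := fun n hn => hn
    refine Set.Finite.subset (Set.Finite.preimage ?_ (Polynomial.finite_setOf_isRoot hα)) hsub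
    intro a _ b _ hab
    exact Nat.cast_injective (add_right_cancel hab)
  set S : Finset ℕ := hfin.toFinset with hS
  have hfwd : {a : Module.End K (Polynomial K) | a ∈ A ∧ a * q = 0}
      ⊆ (Submodule.span K G : Set (Module.End K (Polynomial K))) := by
    rintro a ⟨-, ha2⟩
    have hvan : ∀ n : ℕ, n ∉ S → a (X ^ n) = 0 := by
      intro n hn
      refine (hann a).1 ha2 n ?_
      simpa [hS, Set.Finite.mem_toFinset] using hn
    set b : Module.End K (Polynomial K) :=
      ∑ i ∈ S, ∑ m ∈ (a (X ^ i)).support,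
        (((a (X ^ i)).coeff m) * (c m i)⁻¹) • e m i with hb
    have hab : a = b := by
      have : a - b = 0 := by
        apply endExt0'
        intro n
        rw [LinearMap.sub_apply, sub_eq_zero, hb]
        simp only [LinearMap.coe_sum, Finset.sum_apply, LinearMap.smul_apply]
        by_cases hn : n ∈ S
        · rw [Finset.sum_eq_single n]
          · calc a (X ^ n)
                = ∑ m ∈ (a (X ^ n)).support, ((a (X ^ n)).coeff m) • (X : Polynomial K) ^ m := by
                  conv_lhs => rw [(a (X ^ n)).as_sum_support_C_mul_X_pow]
                  exact Finset.sum_congr rfl fun m _ => (smul_eq_C_mul _).symm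
              _ = ∑ m ∈ (a (X ^ n)).support,
                    (((a (X ^ n)).coeff m) * (c m n)⁻¹) • (e m n) (X ^ n) := by
                  apply Finset.sum_congr rfl
                  intro m _
                  rw [heXj, smul_smul, mul_assoc, inv_mul_cancel₀ (hc0 m n), mul_one]
          · intro i hi hin
            apply Finset.sum_eq_zero
            intro m _
            rw [heX m i n (Ne.symm hin), smul_zero]
          · intro hn'; exact absurd hn hn'
        · rw [hvan n hn]
          apply (Finset.sum_eq_zero _).symm
          intro i hi
          apply Finset.sum_eq_zero
          intro m _
          have hni : n ≠ i := fun h => hn (h ▸ hi)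
          rw [heX m i n hni, smul_zero]
      exact sub_eq_zero.1 this
    rw [hab, SetLike.mem_coe]
    apply Submodule.sum_mem
    intro i hi
    apply Submodule.sum_mem
    intro m _
    apply Submodule.smul_mem
    apply Submodule.subset_span
    exact ⟨i, m, by simpa [hS, Set.Finite.mem_toFinset] using hi, rfl⟩
  refine ⟨?_, ?_⟩
  · intro a ha
    have h1 : a ∈ (Submodule.span K G : Set (Module.End K (Polynomial K))) := hfwd ha
    have h2 : Submodule.span K G ≤ F := by
      rw [hF]
      apply Submodule.span_mono
      rintro f ⟨i, j, _, rfl⟩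
      exact ⟨j, i, rfl⟩
    exact h2 h1
  · exact Set.Subset.antisymm hfwd hrev
end

section
/- The algebra 𝕀₁ admits an involution * determined by ∂* = ∫, ∫* = ∂, H* = H; i.e., there exists a K-linear anti-automorphism * : 𝕀₁ → 𝕀₁ with (ab)* = b*a*, *∘* = id, sending ∂ ↦ ∫, ∫ ↦ ∂. Moreover e_{ij}* = e_{ji} for all i,j. -/
open Polynomial Finset

noncomputable section
variable {K : Type*} [Field K] [CharZero K]
set_option linter.unusedSectionVars false

/-- weighted pairing -/
def Bf (p q : Polynomial K) : K :=
  ∑ n ∈ p.support, (n.factorial : K)^2 * p.coeff n * q.coeff n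

lemma Bf_eq_sum (p q : Polynomial K) {s : Finset ℕ} (hs : p.support ⊆ s) :
    Bf p q = ∑ n ∈ s, (n.factorial : K)^2 * p.coeff n * q.coeff n := by
  unfold Bf
  refine Finset.sum_subset hs ?_
  intro n _ hn
  simp [Polynomial.notMem_support_iff.mp hn]

lemma Bf_comm (p q : Polynomial K) : Bf p q = Bf q p := by
  rw [Bf_eq_sum p q Finset.subset_union_left,
      Bf_eq_sum q p Finset.subset_union_right,
      Finset.union_comm]
  exact Finset.sum_congr rfl (fun n _ => by ring)

lemma Bf_add_left (p p' q : Polynomial K) : Bf (p + p') q = Bf p q + Bf p' q := by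
  rw [Bf_eq_sum (p+p') q (s := p.support ∪ p'.support) (Polynomial.support_add),
      Bf_eq_sum p q Finset.subset_union_left,
      Bf_eq_sum p' q Finset.subset_union_right,
      ← Finset.sum_add_distrib]
  exact Finset.sum_congr rfl (fun n _ => by simp [coeff_add]; ring)

lemma Bf_smul_left (a : K) (p q : Polynomial K) : Bf (a • p) q = a * Bf p q := by
  rw [Bf_eq_sum (a • p) q (s := p.support) (support_smul _ _), Bf, Finset.mul_sum]
  exact Finset.sum_congr rfl (fun n _ => by simp [coeff_smul]; ring)

lemma Bf_add_right (p q q' : Polynomial K) : Bf p (q + q') = Bf p q + Bf p q' := by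
  simp [Bf, coeff_add, mul_add, Finset.sum_add_distrib]

lemma Bf_sub_right (p q q' : Polynomial K) : Bf p (q - q') = Bf p q - Bf p q' := by
  simp [Bf, coeff_sub, mul_sub, Finset.sum_sub_distrib]

lemma Bf_smul_right (a : K) (p q : Polynomial K) : Bf p (a • q) = a * Bf p q := by
  simp [Bf, coeff_smul, Finset.mul_sum]
  exact Finset.sum_congr rfl (fun n _ => by ring)

lemma Bf_zero_left (q : Polynomial K) : Bf 0 q = 0 := by simp [Bf]

lemma Bf_X_pow (n : ℕ) (q : Polynomial K) :
    Bf (X ^ n) q = (n.factorial : K)^2 * q.coeff n := by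
  rw [Bf_eq_sum (X^n) q (s := {n}) (by simp [support_X_pow])]
  simp

lemma Bf_X_pow_X_pow (n m : ℕ) :
    Bf (X ^ n : Polynomial K) (X ^ m) = if n = m then (n.factorial : K)^2 else 0 := by
  rw [Bf_X_pow, coeff_X_pow]
  split <;> simp

/-- nondegeneracy -/
lemma Bf_nondeg {q : Polynomial K} (h : ∀ p, Bf p q = 0) : q = 0 := by
  ext n
  have := h (X ^ n)
  rw [Bf_X_pow] at this
  have hf : ((n.factorial : K))^2 ≠ 0 := by
    exact pow_ne_zero _ (Nat.cast_ne_zero.mpr n.factorial_ne_zero)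
  simpa [hf] using this

/-- adjoint pair -/
def AdjPair (f g : Module.End K (Polynomial K)) : Prop :=
  ∀ p q : Polynomial K, Bf (f p) q = Bf p (g q)

lemma adjPair_symm {f g : Module.End K (Polynomial K)} (h : AdjPair f g) : AdjPair g f := by
  intro p q
  rw [Bf_comm, ← h q p, Bf_comm]

lemma adjPair_uniq {f g g' : Module.End K (Polynomial K)}
    (h : AdjPair f g) (h' : AdjPair f g') : g = g' := by
  refine LinearMap.ext fun q => ?_
  have hz : g q - g' q = 0 := by
    apply Bf_nondeg
    intro p
    rw [Bf_sub_right, ← h p q, ← h' p q, sub_self]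
  exact sub_eq_zero.mp hz

lemma adjPair_uniq' {f g g' : Module.End K (Polynomial K)}
    (h : AdjPair f g) (h' : AdjPair f g') : g = g' := by
  have := adjPair_uniq h h'
  exact this

/-- reduce to monomials -/
lemma adjPair_of_monomial {f g : Module.End K (Polynomial K)}
    (h : ∀ n m : ℕ, Bf (f (X ^ n)) (X ^ m) = Bf ((X : Polynomial K) ^ n) (g (X ^ m))) :
    AdjPair f g := by
  intro p q
  induction p using Polynomial.induction_on' with
  | add p1 p2 h1 h2 => rw [map_add, Bf_add_left, Bf_add_left, h1, h2]
  | monomial n a =>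
    induction q using Polynomial.induction_on' with
    | add q1 q2 h1 h2 => rw [map_add, Bf_add_right, Bf_add_right, h1, h2]
    | monomial m b =>
      rw [← Polynomial.smul_X_eq_monomial, ← Polynomial.smul_X_eq_monomial,
        map_smul, map_smul, Bf_smul_left, Bf_smul_right, Bf_smul_right, Bf_smul_left, h n m]
      ring

lemma adjPair_D_J (D J : Module.End K (Polynomial K))
    (hD : ∀ p : Polynomial K, D p = derivative p)
    (hJ : ∀ n : ℕ, J (X ^ n) = ((n : K) + 1)⁻¹ • X ^ (n + 1)) :
    AdjPair D J := by
  apply adjPair_of_monomial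
  intro n m
  rw [hD, hJ, Bf_smul_right, Bf_X_pow_X_pow]
  cases n with
  | zero => simp [Bf_zero_left]
  | succ k =>
    rw [derivative_X_pow, ← Polynomial.smul_eq_C_mul, Bf_smul_left, Nat.add_sub_cancel,
      Bf_X_pow_X_pow]
    by_cases hkm : k = m
    · subst hkm
      simp only [if_pos rfl, if_pos rfl]
      push_cast [Nat.factorial_succ]
      have h1 : (k : K) + 1 ≠ 0 := Nat.cast_add_one_ne_zero k
      field_simp
    · rw [if_neg hkm, if_neg (by omega : ¬ k + 1 = m + 1)]
      ring

lemma adjPair_Mx (D Mx : Module.End K (Polynomial K))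
    (hD : ∀ p : Polynomial K, D p = derivative p)
    (hMx : ∀ p : Polynomial K, Mx p = X * p) :
    AdjPair Mx (D * Mx * D) := by
  apply adjPair_of_monomial
  intro n m
  have hXpow : Mx (X ^ n : Polynomial K) = X ^ (n + 1) := by rw [hMx, pow_succ']
  rw [hXpow, Bf_X_pow_X_pow, Module.End.mul_apply, Module.End.mul_apply]
  cases m with
  | zero =>
    have h0 : D (X ^ 0 : Polynomial K) = 0 := by rw [hD]; simp
    rw [h0, map_zero, map_zero, if_neg (by omega : ¬ n + 1 = 0)]
    simp [Bf]
  | succ k =>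
    have h1 : D (X ^ (k + 1) : Polynomial K) = ((k : K) + 1) • X ^ k := by
      rw [hD, derivative_X_pow, ← Polynomial.smul_eq_C_mul, Nat.add_sub_cancel]
      push_cast
      rfl
    have h2 : Mx (((k : K) + 1) • (X ^ k : Polynomial K)) = ((k : K) + 1) • X ^ (k + 1) := by
      rw [map_smul, hMx, ← pow_succ']
    rw [h1, h2, map_smul, h1, Bf_smul_right, Bf_smul_right, Bf_X_pow_X_pow]
    by_cases hnk : n = k
    · subst hnk
      simp only [if_pos rfl, if_pos rfl]
      push_cast [Nat.factorial_succ]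
      ring
    · rw [if_neg hnk, if_neg (by omega : ¬ n + 1 = k + 1)]
      ring

lemma adjPair_H (D Mx : Module.End K (Polynomial K))
    (hD : ∀ p : Polynomial K, D p = derivative p)
    (hMx : ∀ p : Polynomial K, Mx p = X * p) :
    AdjPair (D * Mx) (D * Mx) := by
  apply adjPair_of_monomial
  intro n m
  have key : ∀ j : ℕ, (D * Mx) (X ^ j : Polynomial K) = ((j : K) + 1) • X ^ j := by
    intro j
    rw [Module.End.mul_apply, hMx, ← pow_succ', hD, derivative_X_pow, ← Polynomial.smul_eq_C_mul,
      Nat.add_sub_cancel]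
    push_cast
    rfl
  rw [key, key, Bf_smul_left, Bf_smul_right, Bf_X_pow_X_pow]
  by_cases hnm : n = m
  · subst hnm; ring
  · simp [if_neg hnm]

lemma adjPair_one : AdjPair (1 : Module.End K (Polynomial K)) 1 := by
  intro p q
  simp [Module.End.one_apply]

lemma adjPair_algebraMap (r : K) :
    AdjPair (algebraMap K (Module.End K (Polynomial K)) r) (algebraMap K _ r) := by
  intro p q
  simp only [Module.algebraMap_end_apply]
  rw [Bf_smul_left, Bf_smul_right]

lemma adjPair_add {f f' g g' : Module.End K (Polynomial K)}
    (h : AdjPair f g) (h' : AdjPair f' g') : AdjPair (f + f') (g + g') := by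
  intro p q
  rw [LinearMap.add_apply, LinearMap.add_apply, Bf_add_left, Bf_add_right, h, h']

lemma adjPair_mul {f f' g g' : Module.End K (Polynomial K)}
    (h : AdjPair f g) (h' : AdjPair f' g') : AdjPair (f * f') (g' * g) := by
  intro p q
  rw [Module.End.mul_apply, Module.End.mul_apply, h, h']

lemma adjPair_smul (a : K) {f g : Module.End K (Polynomial K)}
    (h : AdjPair f g) : AdjPair (a • f) (a • g) := by
  intro p q
  rw [LinearMap.smul_apply, LinearMap.smul_apply, Bf_smul_left, Bf_smul_right, h]

end

open Polynomial

set_option synthInstance.maxHeartbeats 1000000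
set_option maxHeartbeats 2000000

/-- The algebra `𝕀₁` admits an involution `*`: a `K`-linear anti-automorphism of order two
with `∂* = ∫`, `∫* = ∂`, `H* = H` and `(e i j)* = e j i`. -/
theorem I1_involution (K : Type*) [Field K] [CharZero K]
    (D J Mx H : Module.End K (Polynomial K))
    (hD : ∀ p : Polynomial K, D p = derivative p)
    (hJ : ∀ n : ℕ, J (X ^ n) = ((n : K) + 1)⁻¹ • X ^ (n + 1))
    (hMx : ∀ p : Polynomial K, Mx p = X * p)
    (hH : H = D * Mx)
    (e : ℕ → ℕ → Module.End K (Polynomial K))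
    (he : ∀ i j, e i j = J ^ i * D ^ j - J ^ (i + 1) * D ^ (j + 1))
    (A : Subalgebra K (Module.End K (Polynomial K)))
    (hA : A = Algebra.adjoin K {Mx, D, J})
    (hDA : D ∈ A) (hJA : J ∈ A) (hHA : H ∈ A) (heA : ∀ i j, e i j ∈ A) :
    ∃ σ : A →ₗ[K] A,
      (∀ a b : A, σ (a * b) = σ b * σ a) ∧
      (∀ a : A, σ (σ a) = a) ∧
      σ ⟨D, hDA⟩ = ⟨J, hJA⟩ ∧
      σ ⟨J, hJA⟩ = ⟨D, hDA⟩ ∧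
      σ ⟨H, hHA⟩ = ⟨H, hHA⟩ ∧
      (∀ i j, σ ⟨e i j, heA i j⟩ = ⟨e j i, heA j i⟩) := by
  classical
  have hMxA : Mx ∈ A := by
    rw [hA]; exact Algebra.subset_adjoin (by simp)
  have hdj : AdjPair D J := adjPair_D_J D J hD hJ
  have hjd : AdjPair J D := adjPair_symm hdj
  have hmx : AdjPair Mx (D * Mx * D) := adjPair_Mx D Mx hD hMx
  have hh : AdjPair H H := by rw [hH]; exact adjPair_H D Mx hD hMx
  have exA : ∀ a : Module.End K (Polynomial K), a ∈ A → ∃ g, g ∈ A ∧ AdjPair a g := by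
    intro a ha
    rw [hA] at ha
    refine Algebra.adjoin_induction ?_ ?_ ?_ ?_ ha
    · rintro x hx
      simp only [Set.mem_insert_iff, Set.mem_singleton_iff] at hx
      rcases hx with h | h | h
      · exact ⟨D * Mx * D, mul_mem (mul_mem hDA hMxA) hDA, h ▸ hmx⟩
      · exact ⟨J, hJA, h ▸ hdj⟩
      · exact ⟨D, hDA, h ▸ hjd⟩
    · intro r
      exact ⟨algebraMap K _ r, algebraMap_mem A r, adjPair_algebraMap r⟩
    · rintro x y _ _ ⟨g, hg, hpg⟩ ⟨g', hg', hpg'⟩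
      exact ⟨g + g', add_mem hg hg', adjPair_add hpg hpg'⟩
    · rintro x y _ _ ⟨g, hg, hpg⟩ ⟨g', hg', hpg'⟩
      exact ⟨g' * g, mul_mem hg' hg, adjPair_mul hpg hpg'⟩
  choose! g hgA hgP using exA
  let σ : A →ₗ[K] A :=
    { toFun := fun a => ⟨g a.1, hgA a.1 a.2⟩,
      map_add' := fun a b => Subtype.ext
        (adjPair_uniq (hgP _ (add_mem a.2 b.2))
          (adjPair_add (hgP a.1 a.2) (hgP b.1 b.2))),
      map_smul' := fun r a => Subtype.ext
        (adjPair_uniq (hgP _ (SMulMemClass.smul_mem r a.2))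
          (adjPair_smul r (hgP a.1 a.2))) }
  have hanti : ∀ a b : A, σ (a * b) = σ b * σ a := fun a b => Subtype.ext
    (adjPair_uniq (hgP _ (mul_mem a.2 b.2)) (adjPair_mul (hgP a.1 a.2) (hgP b.1 b.2)))
  have hone : σ 1 = 1 := Subtype.ext (adjPair_uniq (hgP 1 (one_mem A)) adjPair_one)
  have hpow : ∀ (a : A) (k : ℕ), σ (a ^ k) = (σ a) ^ k := by
    intro a k
    induction k with
    | zero => simpa using hone
    | succ k ih => rw [pow_succ, hanti, ih, ← pow_succ']
  have hσD : σ ⟨D, hDA⟩ = ⟨J, hJA⟩ := Subtype.ext (adjPair_uniq (hgP D hDA) hdj)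
  have hσJ : σ ⟨J, hJA⟩ = ⟨D, hDA⟩ := Subtype.ext (adjPair_uniq (hgP J hJA) hjd)
  refine ⟨σ, hanti, ?_, hσD, hσJ, ?_, ?_⟩
  · intro a
    exact Subtype.ext (adjPair_uniq (hgP _ (hgA a.1 a.2)) (adjPair_symm (hgP a.1 a.2)))
  · exact Subtype.ext (adjPair_uniq (hgP H hHA) hh)
  · intro i j
    have h1 : (⟨e i j, heA i j⟩ : A) =
        (⟨J, hJA⟩ : A) ^ i * ⟨D, hDA⟩ ^ j - ⟨J, hJA⟩ ^ (i + 1) * ⟨D, hDA⟩ ^ (j + 1) := by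
      apply Subtype.ext
      simp [he i j]
    rw [h1, map_sub σ, hanti, hanti, hpow, hpow, hpow, hpow, hσD, hσJ]
    apply Subtype.ext
    simp [he j i]
end
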